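/- For λ > 0, a ∈ ℝ, and s > λ + |a|, the degenerate Laplace transform of cosh_λ(at) = ((1+λt)^(a/λ) + (1+λt)^(−a/λ))/2 equals (s−λ)/((s−λ)² − a²). -/

import Mathlib

open MeasureTheory Set Filter Real

lemma aux_hasDeriv (l c : ℝ) (hl : 0 < l) (t : ℝ) (ht : 0 ≤ t) :
    HasDerivAt (fun t : ℝ => (1 + l * t) ^ (1 - c) / (l * (1 - c)))
      ((1 + l * t) ^ (-c) * ((1 - c) * l) / (l * (1 - c))) t := by
  have hpos : (0:ℝ) < 1 + l * t := by nlinarith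
  have h1 : HasDerivAt (fun t : ℝ => 1 + l * t) l t := by
    simpa using ((hasDerivAt_id t).const_mul l).const_add 1
  have h2 := (h1.rpow_const (p := 1 - c) (Or.inl hpos.ne'))
  have h3 := h2.div_const (l * (1 - c))
  refine h3.congr_deriv ?_
  rw [show (1 - c) - 1 = -c by ring]
  ring

lemma aux_integral (l c : ℝ) (hl : 0 < l) (hc : 1 < c) :
    (∫ t in Ioi (0:ℝ), (1 + l * t) ^ (-c)) = 1 / (l * (c - 1)) ∧
    IntegrableOn (fun t : ℝ => (1 + l * t) ^ (-c)) (Ioi 0) := by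
  set g : ℝ → ℝ := fun t => (1 + l * t) ^ (1 - c) / (l * (1 - c)) with hg
  have hne : l * (1 - c) ≠ 0 := by
    have : (1:ℝ) - c ≠ 0 := by linarith
    positivity
  have hderiv : ∀ t ∈ Ioi (0:ℝ), HasDerivAt g ((1 + l * t) ^ (-c)) t := by
    intro t ht
    have := aux_hasDeriv l c hl t (le_of_lt ht)
    convert this using 1
    rw [mul_comm (1-c) l, mul_div_assoc, div_self hne, mul_one]
  have hpos : ∀ t ∈ Ioi (0:ℝ), (0:ℝ) ≤ (1 + l * t) ^ (-c) := by
    intro t ht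
    have : (0:ℝ) < 1 + l * t := by nlinarith [ht.out]
    positivity
  have hcont : ContinuousWithinAt g (Ici 0) 0 :=
    (aux_hasDeriv l c hl 0 le_rfl).continuousAt.continuousWithinAt
  have htend : Tendsto g atTop (nhds 0) := by
    have h1 : Tendsto (fun t : ℝ => 1 + l * t) atTop atTop :=
      tendsto_atTop_add_const_left _ 1 (tendsto_id.const_mul_atTop hl)
    have h2 : Tendsto (fun x : ℝ => x ^ (-(c - 1))) atTop (nhds 0) :=
      tendsto_rpow_neg_atTop (by linarith)
    have h3 := h2.comp h1
    have h4 : Tendsto (fun t : ℝ => (1 + l * t) ^ (1 - c)) atTop (nhds 0) := by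
      simpa [Function.comp_def, show -(c - 1) = 1 - c by ring] using h3
    simpa [hg] using h4.div_const (l * (1 - c))
  have hval := integral_Ioi_of_hasDerivAt_of_nonneg hcont hderiv hpos htend
  have hint := integrableOn_Ioi_deriv_of_nonneg hcont hderiv hpos htend
  refine ⟨?_, hint⟩
  rw [hval]
  have : g 0 = 1 / (l * (1 - c)) := by simp [hg]
  rw [this, zero_sub, show l * (c - 1) = -(l * (1 - c)) by ring, div_neg]

theorem degLaplace_degCosh (l s a : ℝ) (hl : 0 < l) (hs : l + |a| < s) :
    ∫ t in Ioi (0 : ℝ),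
        (1 + l * t) ^ (-(s / l)) *
          (((1 + l * t) ^ (a / l) + (1 + l * t) ^ (-(a / l))) / 2) =
      (s - l) / ((s - l) ^ 2 - a ^ 2) := by
  have ha1 : a < s - l := lt_of_le_of_lt (le_abs_self a) (by linarith)
  have ha2 : -a < s - l := lt_of_le_of_lt (neg_le_abs a) (by linarith)
  have hc1 : 1 < (s - a) / l := (one_lt_div hl).2 (by linarith)
  have hc2 : 1 < (s + a) / l := (one_lt_div hl).2 (by linarith)
  have h1 := aux_integral l ((s - a) / l) hl hc1
  have h2 := aux_integral l ((s + a) / l) hl hc2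
  have hcongr : ∀ t ∈ Ioi (0:ℝ),
      (1 + l * t) ^ (-(s / l)) *
          (((1 + l * t) ^ (a / l) + (1 + l * t) ^ (-(a / l))) / 2) =
      ((1 + l * t) ^ (-((s - a) / l)) + (1 + l * t) ^ (-((s + a) / l))) / 2 := by
    intro t ht
    have hpos : (0:ℝ) < 1 + l * t := by nlinarith [ht.out]
    have hl' : l ≠ 0 := hl.ne'
    have e1 : -((s - a) / l) = -(s / l) + a / l := by field_simp; ring
    have e2 : -((s + a) / l) = -(s / l) + -(a / l) := by field_simp; ring
    rw [e1, e2, Real.rpow_add hpos, Real.rpow_add hpos]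
    ring
  rw [setIntegral_congr_fun measurableSet_Ioi hcongr]
  have hsplit : ∫ t in Ioi (0:ℝ),
      ((1 + l * t) ^ (-((s - a) / l)) + (1 + l * t) ^ (-((s + a) / l))) / 2 =
      ((∫ t in Ioi (0:ℝ), (1 + l * t) ^ (-((s - a) / l))) +
       (∫ t in Ioi (0:ℝ), (1 + l * t) ^ (-((s + a) / l)))) / 2 := by
    rw [← integral_add h1.2 h2.2]
    simp [integral_div]
  rw [hsplit, h1.1, h2.1]
  have e1 : l * ((s - a) / l - 1) = s - a - l := by field_simp
  have e2 : l * ((s + a) / l - 1) = s + a - l := by field_simp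
  rw [e1, e2]
  have d1 : s - a - l ≠ 0 := by intro h; linarith [ha1]
  have d2 : s + a - l ≠ 0 := by intro h; linarith [ha2]
  have d3 : (s - l) ^ 2 - a ^ 2 ≠ 0 := by
    intro h
    have : (s - l - a) * (s - l + a) = 0 := by ring_nf; linarith [h]
    rcases mul_eq_zero.1 this with h' | h' <;> [exact d1 (by linarith); exact d2 (by linarith)]
  field_simp
  ring
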